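/- arXiv:2101.03037 — 2 statements merged into one kernel-verified Lean document; each statement's English description precedes it below -/
import Mathlib

section
/- The quantum Wasserstein-1 (EM) norm of any traceless Hermitian operator X on n qubits whose partial trace over the first qubit vanishes equals half its trace norm: if Tr₁ X = 0 then ‖X‖_{EM} = ‖X‖₁ / 2. -/
open scoped BigOperators ComplexOrder

/-- Matrices acting on `n` qubits. -/
abbrev QMat (n : ℕ) := Matrix (Fin n → Fin 2) (Fin n → Fin 2) ℂ

/-- The trace norm (sum of the absolute values of the eigenvalues) of a Hermitian matrix. -/
noncomputable def traceNorm {n : ℕ} (X : QMat n) : ℝ :=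
  if h : X.IsHermitian then ∑ i, |h.eigenvalues i| else 0

/-- The partial trace of `X` over qubit `i` vanishes. -/
def ptraceZero {n : ℕ} (i : Fin n) (X : QMat n) : Prop :=
  ∀ a b : Fin n → Fin 2,
    ∑ v : Fin 2, X (Function.update a i v) (Function.update b i v) = 0

/-- The quantum Wasserstein-1 (earth mover's) norm, primal formulation:
`‖X‖_EM = (1/2) min { Σᵢ ‖Xᵢ‖₁ : Xᵢ Hermitian, Trᵢ Xᵢ = 0, Σᵢ Xᵢ = X }`. -/
noncomputable def emNorm {n : ℕ} (X : QMat n) : ℝ :=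
  (1 / 2) * sInf { r | ∃ Xs : Fin n → QMat n,
    (∀ i, (Xs i).IsHermitian) ∧ (∀ i, ptraceZero i (Xs i)) ∧
    (∑ i, Xs i) = X ∧ r = ∑ i, traceNorm (Xs i) }

/-- The quantum Wasserstein-1 (earth mover's) distance. -/
noncomputable def emDist {n : ℕ} (ρ σ : QMat n) : ℝ := emNorm (ρ - σ)

/-- A density matrix: positive semidefinite with unit trace. -/
def IsState {n : ℕ} (ρ : QMat n) : Prop := ρ.PosSemidef ∧ ρ.trace = 1

open Matrix

lemma traceNorm_of_isHermitian {n : ℕ} {X : QMat n} (h : X.IsHermitian) :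
    traceNorm X = ∑ i, |h.eigenvalues i| := dif_pos h

lemma traceNorm_nonneg {n : ℕ} (X : QMat n) : 0 ≤ traceNorm X := by
  unfold traceNorm
  split
  · exact Finset.sum_nonneg fun i _ => abs_nonneg _
  · exact le_refl 0

lemma eigenvalues_zero {n : ℕ} (h : (0 : QMat n).IsHermitian) (i : Fin n → Fin 2) :
    h.eigenvalues i = 0 := by
  exact congrFun (h.eigenvalues_eq_zero_iff.mpr rfl) i

lemma traceNorm_zero {n : ℕ} : traceNorm (0 : QMat n) = 0 := by
  rw [traceNorm_of_isHermitian Matrix.isHermitian_zero]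
  simp [eigenvalues_zero]

/-- Key duality bound: for a "contraction of sign type" `S = U * diagonal f * Uᴴ` with
`U` unitary and `|f k| ≤ 1`, `re (tr (S Y)) ≤ ‖Y‖₁` for Hermitian `Y`. -/
lemma re_trace_mul_le_traceNorm {n : ℕ} (Y : QMat n) (hY : Y.IsHermitian)
    (U : QMat n) (hU : U ∈ Matrix.unitaryGroup (Fin n → Fin 2) ℂ)
    (f : (Fin n → Fin 2) → ℂ) (hf : ∀ k, ‖f k‖ ≤ 1) :
    ((U * Matrix.diagonal f * star U * Y).trace).re ≤ traceNorm Y := by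
  classical
  set V : QMat n := (hY.eigenvectorUnitary : QMat n) with hV
  have hVu : V ∈ Matrix.unitaryGroup (Fin n → Fin 2) ℂ := hY.eigenvectorUnitary.2
  set W : QMat n := star U * V with hW
  have hWu : W ∈ Matrix.unitaryGroup (Fin n → Fin 2) ℂ := by
    exact Submonoid.mul_mem _ ((Unitary.star_mem_iff).mpr hU) hVu
  have hWW : star W * W = 1 := (Unitary.mem_iff.mp hWu).1
  -- trace computation
  have hspec : Y = V * Matrix.diagonal (RCLike.ofReal ∘ hY.eigenvalues) * star V :=
    hY.spectral_theorem
  have htr : (U * Matrix.diagonal f * star U * Y).trace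
      = ∑ j, (star W * Matrix.diagonal f * W) j j * (hY.eigenvalues j : ℂ) := by
    conv_lhs => rw [hspec]
    rw [show U * Matrix.diagonal f * star U * (V * Matrix.diagonal (RCLike.ofReal ∘ hY.eigenvalues) * star V)
        = (U * Matrix.diagonal f * star U * V) * Matrix.diagonal (RCLike.ofReal ∘ hY.eigenvalues) * star V by
      simp only [Matrix.mul_assoc]]
    rw [Matrix.trace_mul_comm]
    rw [show star V * (U * Matrix.diagonal f * star U * V * Matrix.diagonal (RCLike.ofReal ∘ hY.eigenvalues))
        = (star W * Matrix.diagonal f * W) * Matrix.diagonal (RCLike.ofReal ∘ hY.eigenvalues) by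
      simp [hW, StarMul.star_mul, star_star, Matrix.mul_assoc]]
    simp [Matrix.trace, Matrix.mul_diagonal, Matrix.diag]
  -- diagonal entries bound
  have hdiag : ∀ j, ‖(star W * Matrix.diagonal f * W) j j‖ ≤ 1 := by
    intro j
    have hentry : (star W * Matrix.diagonal f * W) j j
        = ∑ k, (starRingEnd ℂ) (W k j) * f k * W k j := by
      simp [Matrix.mul_apply, Matrix.diagonal_apply, Matrix.star_apply, Complex.star_def,
        ite_mul, mul_ite, zero_mul, mul_zero, Finset.sum_ite_eq, Finset.sum_ite_eq']
    have hnorm : ∑ k, Complex.normSq (W k j) = 1 := by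
      have h0 : ∑ k, (starRingEnd ℂ) (W k j) * W k j = 1 := by
        simpa [Matrix.mul_apply, Matrix.star_apply, Matrix.one_apply, Complex.star_def]
          using congrFun (congrFun hWW j) j
      have h1 : ((∑ k, Complex.normSq (W k j) : ℝ) : ℂ) = 1 := by
        push_cast [Complex.normSq_eq_conj_mul_self]
        exact h0
      exact_mod_cast h1
    calc ‖(star W * Matrix.diagonal f * W) j j‖
        ≤ ∑ k, ‖(starRingEnd ℂ) (W k j) * f k * W k j‖ := by
          rw [hentry]; exact norm_sum_le _ _
      _ ≤ ∑ k, Complex.normSq (W k j) := by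
          apply Finset.sum_le_sum
          intro k _
          rw [norm_mul, norm_mul, Complex.norm_conj]
          have : ‖W k j‖ * ‖W k j‖ = Complex.normSq (W k j) := by
            rw [← Complex.sq_norm]; ring
          calc ‖W k j‖ * ‖f k‖ * ‖W k j‖
              ≤ ‖W k j‖ * 1 * ‖W k j‖ := by
                apply mul_le_mul_of_nonneg_right _ (norm_nonneg _)
                exact mul_le_mul_of_nonneg_left (hf k) (norm_nonneg _)
            _ = Complex.normSq (W k j) := by rw [mul_one, this]
      _ = 1 := hnorm
  -- conclude
  rw [htr, traceNorm_of_isHermitian hY]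
  rw [Complex.re_sum]
  apply Finset.sum_le_sum
  intro j _
  have : (((star W * Matrix.diagonal f * W) j j * (hY.eigenvalues j : ℂ)).re)
      = ((star W * Matrix.diagonal f * W) j j).re * hY.eigenvalues j := by
    simp [Complex.mul_re]
  rw [this]
  calc ((star W * Matrix.diagonal f * W) j j).re * hY.eigenvalues j
      ≤ |((star W * Matrix.diagonal f * W) j j).re * hY.eigenvalues j| := le_abs_self _
    _ = |((star W * Matrix.diagonal f * W) j j).re| * |hY.eigenvalues j| := abs_mul _ _
    _ ≤ 1 * |hY.eigenvalues j| := by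
        apply mul_le_mul_of_nonneg_right _ (abs_nonneg _)
        exact (Complex.abs_re_le_norm _).trans (hdiag j)
    _ = |hY.eigenvalues j| := one_mul _

lemma sign_trace_eq {n : ℕ} (X : QMat n) (hX : X.IsHermitian) :
    ∃ (U : QMat n) (f : (Fin n → Fin 2) → ℂ),
      U ∈ Matrix.unitaryGroup (Fin n → Fin 2) ℂ ∧ (∀ k, ‖f k‖ ≤ 1) ∧
      ((U * Matrix.diagonal f * star U * X).trace).re = traceNorm X := by
  classical
  set U : QMat n := (hX.eigenvectorUnitary : QMat n) with hU
  have hUu : U ∈ Matrix.unitaryGroup (Fin n → Fin 2) ℂ := hX.eigenvectorUnitary.2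
  have hsUU : star U * U = 1 := (Unitary.mem_iff.mp hUu).1
  set f : (Fin n → Fin 2) → ℂ := fun k => if hX.eigenvalues k < 0 then -1 else 1 with hf
  refine ⟨U, f, hUu, ?_, ?_⟩
  · intro k; rw [hf]; dsimp only; split <;> simp
  · have hspec : X = U * Matrix.diagonal (RCLike.ofReal ∘ hX.eigenvalues) * star U :=
      hX.spectral_theorem
    have key : U * Matrix.diagonal f * star U * X
        = U * (Matrix.diagonal f * Matrix.diagonal (RCLike.ofReal ∘ hX.eigenvalues)) * star U := by
      conv_lhs => rw [hspec]
      calc U * Matrix.diagonal f * star U * (U * Matrix.diagonal (RCLike.ofReal ∘ hX.eigenvalues) * star U)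
          = U * Matrix.diagonal f * (star U * U) * Matrix.diagonal (RCLike.ofReal ∘ hX.eigenvalues) * star U := by
            simp only [Matrix.mul_assoc]
        _ = _ := by rw [hsUU]; simp only [Matrix.mul_one, Matrix.mul_assoc]
    rw [key, Matrix.trace_mul_comm, ← Matrix.mul_assoc, hsUU, Matrix.one_mul,
      Matrix.diagonal_mul_diagonal, Matrix.trace_diagonal, traceNorm_of_isHermitian hX,
      Complex.re_sum]
    apply Finset.sum_congr rfl
    intro k _
    rw [hf]
    by_cases hk : hX.eigenvalues k < 0
    · simp [hk, abs_of_neg hk]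
    · simp [hk, abs_of_nonneg (not_lt.mp hk)]

/-- If `X` is traceless etc. -/
theorem emNorm_of_ptraceZero_first (n : ℕ) (hn : 0 < n) (X : QMat n)
    (hX : X.IsHermitian) (htr : X.trace = 0) (h1 : ptraceZero ⟨0, hn⟩ X) :
    emNorm X = traceNorm X / 2 := by
  classical
  set i₀ : Fin n := ⟨0, hn⟩
  set S : Set ℝ := { r | ∃ Xs : Fin n → QMat n,
    (∀ i, (Xs i).IsHermitian) ∧ (∀ i, ptraceZero i (Xs i)) ∧
    (∑ i, Xs i) = X ∧ r = ∑ i, traceNorm (Xs i) } with hS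
  have hmem : traceNorm X ∈ S := by
    refine ⟨fun i => if i = i₀ then X else 0, ?_, ?_, ?_, ?_⟩
    · intro i; by_cases h : i = i₀ <;> simp [h, hX, Matrix.isHermitian_zero]
    · intro i a b
      by_cases h : i = i₀
      · subst h; simpa using h1 a b
      · simp [h]
    · simp [Finset.sum_ite_eq']
    · have : ∀ i : Fin n, traceNorm (if i = i₀ then X else 0)
          = if i = i₀ then traceNorm X else 0 := by
        intro i; by_cases h : i = i₀ <;> simp [h, traceNorm_zero]
      simp only [this, Finset.sum_ite_eq', Finset.mem_univ, if_true]
  have hbdd : BddBelow S := by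
    refine ⟨0, ?_⟩
    rintro r ⟨Xs, -, -, -, rfl⟩
    exact Finset.sum_nonneg fun i _ => traceNorm_nonneg _
  have hlb : ∀ r ∈ S, traceNorm X ≤ r := by
    rintro r ⟨Xs, hherm, -, hsum, rfl⟩
    obtain ⟨U, f, hUu, hf, hNeq⟩ := sign_trace_eq X hX
    calc traceNorm X = ((U * Matrix.diagonal f * star U * X).trace).re := hNeq.symm
      _ = ∑ i, ((U * Matrix.diagonal f * star U * Xs i).trace).re := by
          rw [← hsum, Finset.mul_sum, Matrix.trace_sum, Complex.re_sum]
      _ ≤ ∑ i, traceNorm (Xs i) := Finset.sum_le_sum fun i _ =>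
          re_trace_mul_le_traceNorm (Xs i) (hherm i) U hUu f hf
  have : sInf S = traceNorm X :=
    le_antisymm (csInf_le hbdd hmem) (le_csInf ⟨_, hmem⟩ hlb)
  rw [emNorm, ← hS, this]
  ring
end

section
/- For any two n-qubit states ρ and σ, the quantum EM distance is squeezed between the trace distance and n times the trace distance: D₁(ρ,σ) ≤ D_{EM}(ρ,σ) ≤ n·D₁(ρ,σ), where D₁(ρ,σ) = ‖ρ−σ‖₁/2. -/
open scoped BigOperators ComplexOrder

namespace EMAux
open Matrix

variable {m : Type*} [Fintype m] [DecidableEq m]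

lemma psd_trace_nonneg {P : Matrix m m ℂ} (hP : P.PosSemidef) : 0 ≤ P.trace := by
  refine Finset.sum_nonneg fun i _ => ?_
  simpa [dotProduct, Pi.single_apply, mulVec, apply_ite] using hP.dotProduct_mulVec_nonneg (Pi.single i 1)

lemma trace_mul_nonneg {P M : Matrix m m ℂ} (hP : P.PosSemidef) (hM : M.PosSemidef) :
    0 ≤ (P * M).trace := by
  obtain ⟨B, rfl⟩ : ∃ B : Matrix m m ℂ, P = Bᴴ * B := by
    open scoped MatrixOrder in exact CStarAlgebra.nonneg_iff_eq_star_mul_self.mp hP.nonneg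
  obtain ⟨C, rfl⟩ : ∃ C : Matrix m m ℂ, M = Cᴴ * C := by
    open scoped MatrixOrder in exact CStarAlgebra.nonneg_iff_eq_star_mul_self.mp hM.nonneg
  have h1 : (Bᴴ * B * (Cᴴ * C)).trace = ((C * Bᴴ)ᴴ * (C * Bᴴ)).trace := by
    rw [conjTranspose_mul, conjTranspose_conjTranspose,
      show Bᴴ * B * (Cᴴ * C) = Bᴴ * (B * (Cᴴ * C)) from mul_assoc _ _ _, trace_mul_comm]
    simp only [mul_assoc]
  rw [h1]
  exact psd_trace_nonneg (posSemidef_conjTranspose_mul_self _)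

lemma trace_unitary_conj (M : Matrix m m ℂ) {U : Matrix m m ℂ} (hU : Uᴴ * U = 1) :
    (U * M * Uᴴ).trace = M.trace := by
  rw [trace_mul_comm, ← mul_assoc, hU, one_mul]

end EMAux

namespace EMAux
open Matrix
variable {m : Type*} [Fintype m] [DecidableEq m]

lemma conj_mul_conj (U X Y : Matrix m m ℂ) (hU : star U * U = 1) :
    (U * X * star U) * (U * Y * star U) = U * (X * Y) * star U := by
  simp only [mul_assoc]
  rw [← mul_assoc (star U) U, hU, one_mul]

lemma trace_conj (M : Matrix m m ℂ) {U : Matrix m m ℂ} (hU : star U * U = 1) :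
    (U * M * star U).trace = M.trace := by
  rw [trace_mul_comm, ← mul_assoc, hU, one_mul]

lemma abs_eigenvalues_le {A P Q : Matrix m m ℂ} (hA : A.IsHermitian)
    (hP : P.PosSemidef) (hQ : Q.PosSemidef) (hd : A = P - Q) :
    ∑ i, |hA.eigenvalues i| ≤ (P.trace + Q.trace).re := by
  set U : Matrix m m ℂ := (hA.eigenvectorUnitary : Matrix m m ℂ) with hUdef
  have hUU : star U * U = 1 := hA.eigenvectorUnitary.prop.1
  have hUU' : U * star U = 1 := hA.eigenvectorUnitary.prop.2
  set sg : m → ℝ := fun i => if 0 ≤ hA.eigenvalues i then 1 else -1 with hsg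
  set S : Matrix m m ℂ := U * diagonal (fun i => (sg i : ℂ)) * star U with hS
  have hAS : (A * S).trace = ((∑ i, |hA.eigenvalues i| : ℝ) : ℂ) := by
    conv_lhs => rw [hA.spectral_theorem, Unitary.conjStarAlgAut_apply, hS, ← hUdef]
    rw [conj_mul_conj _ _ _ hUU, diagonal_mul_diagonal, trace_conj _ hUU, trace_diagonal]
    push_cast
    refine Finset.sum_congr rfl fun i _ => ?_
    by_cases h : 0 ≤ hA.eigenvalues i
    · simp [hsg, h, abs_of_nonneg h, RCLike.ofReal_alg]
    · push_neg at h
      simp [hsg, not_le.mpr h, abs_of_neg h, RCLike.ofReal_alg]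
  have hone : (1 : Matrix m m ℂ) = U * 1 * star U := by rw [mul_one, hUU']
  have h1S : (1 - S).PosSemidef := by
    have : 1 - S = U * (1 - diagonal (fun i => (sg i : ℂ))) * star U := by
      rw [mul_sub, sub_mul, ← hone]
    rw [this, star_eq_conjTranspose]
    refine PosSemidef.mul_mul_conjTranspose_same ?_ U
    rw [← diagonal_one, diagonal_sub]
    refine posSemidef_diagonal_iff.mpr fun i => ?_
    rw [show (1 : ℂ) - (sg i : ℂ) = ((1 - sg i : ℝ) : ℂ) by push_cast; ring]
    rw [Complex.zero_le_real, hsg]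
    by_cases h : 0 ≤ hA.eigenvalues i <;> simp [h]
  have h2S : (1 + S).PosSemidef := by
    have : 1 + S = U * (1 + diagonal (fun i => (sg i : ℂ))) * star U := by
      rw [mul_add, add_mul, ← hone]
    rw [this, star_eq_conjTranspose]
    refine PosSemidef.mul_mul_conjTranspose_same ?_ U
    rw [← diagonal_one, diagonal_add]
    refine posSemidef_diagonal_iff.mpr fun i => ?_
    rw [show (1 : ℂ) + (sg i : ℂ) = ((1 + sg i : ℝ) : ℂ) by push_cast; ring]
    rw [Complex.zero_le_real, hsg]
    by_cases h : 0 ≤ hA.eigenvalues i <;> simp [h]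
  have iP : ((P * S).trace).re ≤ (P.trace).re := by
    have h0 : 0 ≤ (P * (1 - S)).trace := trace_mul_nonneg hP h1S
    rw [mul_sub, mul_one, trace_sub] at h0
    have := (Complex.le_def.mp h0).1
    simpa [Complex.sub_re] using this
  have iQ : -((Q * S).trace).re ≤ (Q.trace).re := by
    have h0 : 0 ≤ (Q * (1 + S)).trace := trace_mul_nonneg hQ h2S
    rw [mul_add, mul_one, trace_add] at h0
    have := (Complex.le_def.mp h0).1
    simp only [Complex.zero_re, Complex.add_re] at this
    linarith
  have e1 : ((A * S).trace).re = ((P * S).trace).re - ((Q * S).trace).re := by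
    rw [hd, sub_mul, trace_sub, Complex.sub_re]
  have : ((A * S).trace).re = ∑ i, |hA.eigenvalues i| := by rw [hAS, Complex.ofReal_re]
  rw [← this, e1, Complex.add_re]
  linarith

end EMAux

namespace EMAux
open Matrix
variable {m : Type*} [Fintype m] [DecidableEq m]

lemma exists_jordan {A : Matrix m m ℂ} (hA : A.IsHermitian) :
    ∃ P Q : Matrix m m ℂ, P.PosSemidef ∧ Q.PosSemidef ∧ A = P - Q ∧
      (P.trace + Q.trace).re = ∑ i, |hA.eigenvalues i| ∧
      P.trace = ((∑ i, max (hA.eigenvalues i) 0 : ℝ) : ℂ) ∧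
      Q.trace = ((∑ i, max (-hA.eigenvalues i) 0 : ℝ) : ℂ) := by
  set U : Matrix m m ℂ := (hA.eigenvectorUnitary : Matrix m m ℂ) with hUdef
  have hUU : star U * U = 1 := hA.eigenvectorUnitary.prop.1
  refine ⟨U * diagonal (fun i => ((max (hA.eigenvalues i) 0 : ℝ) : ℂ)) * star U,
    U * diagonal (fun i => ((max (-hA.eigenvalues i) 0 : ℝ) : ℂ)) * star U, ?_, ?_, ?_, ?_, ?_, ?_⟩
  · rw [star_eq_conjTranspose]
    exact (posSemidef_diagonal_iff.mpr fun i =>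
      Complex.zero_le_real.mpr (le_max_right _ _)).mul_mul_conjTranspose_same U
  · rw [star_eq_conjTranspose]
    exact (posSemidef_diagonal_iff.mpr fun i =>
      Complex.zero_le_real.mpr (le_max_right _ _)).mul_mul_conjTranspose_same U
  · conv_lhs => rw [hA.spectral_theorem, Unitary.conjStarAlgAut_apply, ← hUdef]
    rw [← sub_mul, ← mul_sub, diagonal_sub]
    have hfun : (fun i => ((max (hA.eigenvalues i) 0 : ℝ) : ℂ)
        - ((max (-hA.eigenvalues i) 0 : ℝ) : ℂ)) = RCLike.ofReal ∘ hA.eigenvalues := by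
      funext i
      rw [show ((max (hA.eigenvalues i) 0 : ℝ) : ℂ) - ((max (-hA.eigenvalues i) 0 : ℝ) : ℂ)
        = ((max (hA.eigenvalues i) 0 - max (-hA.eigenvalues i) 0 : ℝ) : ℂ) by push_cast; ring]
      simp [max_zero_sub_max_neg_zero_eq_self, RCLike.ofReal_alg]
    rw [hfun]
  · rw [trace_conj _ hUU, trace_conj _ hUU, trace_diagonal, trace_diagonal]
    push_cast
    rw [← Complex.ofReal_sum, ← Complex.ofReal_sum, ← Complex.ofReal_add, Complex.ofReal_re,
      ← Finset.sum_add_distrib]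
    refine Finset.sum_congr rfl fun i _ => ?_
    rcases le_total 0 (hA.eigenvalues i) with h | h
    · rw [abs_of_nonneg h, max_eq_left h, max_eq_right (neg_nonpos.mpr h), add_zero]
    · rw [abs_of_nonpos h, max_eq_right h, max_eq_left (neg_nonneg.mpr h), zero_add]
  · rw [trace_conj _ hUU, trace_diagonal, Complex.ofReal_sum]
  · rw [trace_conj _ hUU, trace_diagonal, Complex.ofReal_sum]

end EMAux

namespace EMAux
open Matrix
variable {n : ℕ}

lemma traceNorm_nonneg (X : QMat n) : 0 ≤ traceNorm X := by
  rw [traceNorm]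
  split
  · exact Finset.sum_nonneg fun i _ => abs_nonneg _
  · exact le_refl _

lemma traceNorm_le_decomp {A P Q : QMat n} (hP : P.PosSemidef) (hQ : Q.PosSemidef)
    (hd : A = P - Q) : traceNorm A ≤ (P.trace + Q.trace).re := by
  have hA : A.IsHermitian := hd ▸ hP.1.sub hQ.1
  rw [traceNorm, dif_pos hA]
  exact abs_eigenvalues_le hA hP hQ hd

lemma exists_jordan' {A : QMat n} (hA : A.IsHermitian) :
    ∃ P Q : QMat n, P.PosSemidef ∧ Q.PosSemidef ∧ A = P - Q ∧
      (P.trace + Q.trace).re = traceNorm A := by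
  obtain ⟨P, Q, hP, hQ, hd, htr, -, -⟩ := exists_jordan hA
  exact ⟨P, Q, hP, hQ, hd, by rw [traceNorm, dif_pos hA]; exact htr⟩

lemma psd_sum {ι : Type*} {m : Type*} [Fintype m] [DecidableEq m] (s : Finset ι)
    (F : ι → Matrix m m ℂ) (h : ∀ i ∈ s, (F i).PosSemidef) :
    (∑ i ∈ s, F i).PosSemidef :=
  Finset.sum_induction F _ (fun _ _ ha hb => ha.add hb) PosSemidef.zero h

lemma traceNorm_sum_le {ι : Type*} [Fintype ι] (F : ι → QMat n)
    (h : ∀ i, (F i).IsHermitian) :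
    traceNorm (∑ i, F i) ≤ ∑ i, traceNorm (F i) := by
  choose P Q hP hQ hd htr using fun i => exists_jordan' (h i)
  have hsum : (∑ i, F i) = (∑ i, P i) - (∑ i, Q i) := by
    rw [← Finset.sum_sub_distrib]
    exact Finset.sum_congr rfl fun i _ => hd i
  refine le_trans (traceNorm_le_decomp (psd_sum _ _ fun i _ => hP i)
    (psd_sum _ _ fun i _ => hQ i) hsum) ?_
  rw [trace_sum, trace_sum, ← Finset.sum_add_distrib]
  rw [Complex.re_sum]
  exact le_of_eq (Finset.sum_congr rfl fun i _ => htr i)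

lemma eq_zero_of_traceNorm_eq_zero {A : QMat n} (hA : A.IsHermitian)
    (h : traceNorm A = 0) : A = 0 := by
  rw [traceNorm, dif_pos hA] at h
  have hz : ∀ i, hA.eigenvalues i = 0 := by
    intro i
    have := (Finset.sum_eq_zero_iff_of_nonneg (fun i _ => abs_nonneg _)).mp h i (Finset.mem_univ i)
    exact abs_eq_zero.mp this
  have : RCLike.ofReal ∘ hA.eigenvalues = fun _ => (0 : ℂ) := by
    funext i; simp [hz i]
  rw [hA.spectral_theorem, this]
  simp

lemma psd_smul {m : Type*} [Fintype m] [DecidableEq m] {M : Matrix m m ℂ}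
    (hM : M.PosSemidef) {c : ℝ} (hc : 0 ≤ c) : ((c : ℂ) • M).PosSemidef := by
  constructor
  · rw [IsHermitian, conjTranspose_smul, hM.1.eq]
    congr 1
    simp [Complex.star_def, Complex.conj_ofReal]
  · intro x
    exact (hM.smul (Complex.zero_le_real.mpr hc)).2 x

end EMAux

section KronSec
open Matrix Kronecker

namespace EMAux
variable {n : ℕ}

abbrev Lo (n k : ℕ) := {j : Fin n // (j : ℕ) < k}
abbrev Hi (n k : ℕ) := {j : Fin n // ¬ (j : ℕ) < k}

def spl (n k : ℕ) : (Fin n → Fin 2) ≃ (Lo n k → Fin 2) × (Hi n k → Fin 2) :=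
  Equiv.piEquivPiSubtypeProd (fun j : Fin n => (j : ℕ) < k) (fun _ => Fin 2)

lemma spl_fst (k : ℕ) (a : Fin n → Fin 2) (j : Lo n k) : ((spl n k) a).1 j = a j := rfl
lemma spl_snd (k : ℕ) (a : Fin n → Fin 2) (j : Hi n k) : ((spl n k) a).2 j = a j := rfl

lemma spl_symm_apply (k : ℕ) (x : Lo n k → Fin 2) (z : Hi n k → Fin 2) (j : Fin n) :
    (spl n k).symm (x, z) j = if h : (j : ℕ) < k then x ⟨j, h⟩ else z ⟨j, h⟩ := rfl

noncomputable def mlo (k : ℕ) (A : QMat n) : Matrix (Lo n k → Fin 2) (Lo n k → Fin 2) ℂ :=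
  ∑ z : Hi n k → Fin 2,
    A.submatrix (fun x => (spl n k).symm (x, z)) (fun x => (spl n k).symm (x, z))

noncomputable def mhi (k : ℕ) (B : QMat n) : Matrix (Hi n k → Fin 2) (Hi n k → Fin 2) ℂ :=
  ∑ z : Lo n k → Fin 2,
    B.submatrix (fun x => (spl n k).symm (z, x)) (fun x => (spl n k).symm (z, x))

noncomputable def EE (k : ℕ) (A B : QMat n) : QMat n :=
  ((mlo k A) ⊗ₖ (mhi k B)).submatrix (spl n k) (spl n k)

lemma mlo_apply (k : ℕ) (A : QMat n) (x y : Lo n k → Fin 2) :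
    mlo k A x y = ∑ z : Hi n k → Fin 2, A ((spl n k).symm (x, z)) ((spl n k).symm (y, z)) := by
  simp [mlo, Matrix.sum_apply]

lemma mhi_apply (k : ℕ) (B : QMat n) (x y : Hi n k → Fin 2) :
    mhi k B x y = ∑ z : Lo n k → Fin 2, B ((spl n k).symm (z, x)) ((spl n k).symm (z, y)) := by
  simp [mhi, Matrix.sum_apply]

lemma EE_apply (k : ℕ) (A B : QMat n) (a b : Fin n → Fin 2) :
    EE k A B a b = mlo k A ((spl n k) a).1 ((spl n k) b).1
      * mhi k B ((spl n k) a).2 ((spl n k) b).2 := rfl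

lemma psd_sum' {ι : Type*} {m : Type*} [Fintype m] [DecidableEq m] [Fintype ι]
    (F : ι → Matrix m m ℂ) (h : ∀ i, (F i).PosSemidef) :
    (∑ i, F i).PosSemidef :=
  Finset.sum_induction F _ (fun _ _ ha hb => ha.add hb) PosSemidef.zero (fun i _ => h i)

lemma mlo_psd (k : ℕ) {A : QMat n} (hA : A.PosSemidef) : (mlo k A).PosSemidef :=
  psd_sum' _ fun z => hA.submatrix _

lemma mhi_psd (k : ℕ) {B : QMat n} (hB : B.PosSemidef) : (mhi k B).PosSemidef :=
  psd_sum' _ fun z => hB.submatrix _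

lemma kron_conjTranspose {α β : Type*} [Fintype α] [Fintype β]
    (M : Matrix α α ℂ) (N : Matrix β β ℂ) : (M ⊗ₖ N)ᴴ = Mᴴ ⊗ₖ Nᴴ := by
  ext ⟨a, b⟩ ⟨c, d⟩
  simp [conjTranspose_apply, Matrix.kroneckerMap_apply, star_mul']

lemma kron_psd {α β : Type*} [Fintype α] [Fintype β] [DecidableEq α] [DecidableEq β]
    {M : Matrix α α ℂ} {N : Matrix β β ℂ} (hM : M.PosSemidef) (hN : N.PosSemidef) :
    (M ⊗ₖ N).PosSemidef := by
  obtain ⟨B, rfl⟩ : ∃ B : Matrix α α ℂ, M = Bᴴ * B := by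
    open scoped MatrixOrder in exact CStarAlgebra.nonneg_iff_eq_star_mul_self.mp hM.nonneg
  obtain ⟨C, rfl⟩ : ∃ C : Matrix β β ℂ, N = Cᴴ * C := by
    open scoped MatrixOrder in exact CStarAlgebra.nonneg_iff_eq_star_mul_self.mp hN.nonneg
  rw [Matrix.mul_kronecker_mul, ← kron_conjTranspose]
  exact posSemidef_conjTranspose_mul_self _

lemma EE_psd (k : ℕ) {A B : QMat n} (hA : A.PosSemidef) (hB : B.PosSemidef) :
    (EE k A B).PosSemidef :=
  (kron_psd (mlo_psd k hA) (mhi_psd k hB)).submatrix _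

lemma trace_submatrix_equiv {α β : Type*} [Fintype α] [Fintype β] (e : α ≃ β)
    (M : Matrix β β ℂ) : (M.submatrix e e).trace = M.trace := by
  simp only [Matrix.trace, Matrix.diag, submatrix_apply]
  exact Equiv.sum_comp e (fun p => M p p)

lemma trace_mlo (k : ℕ) (A : QMat n) : (mlo k A).trace = A.trace := by
  rw [mlo, trace_sum]
  simp only [Matrix.trace, Matrix.diag, submatrix_apply]
  rw [← Equiv.sum_comp (spl n k).symm (fun a => A a a), Fintype.sum_prod_type, Finset.sum_comm]

lemma trace_mhi (k : ℕ) (B : QMat n) : (mhi k B).trace = B.trace := by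
  rw [mhi, trace_sum]
  simp only [Matrix.trace, Matrix.diag, submatrix_apply]
  rw [← Equiv.sum_comp (spl n k).symm (fun a => B a a), Fintype.sum_prod_type]

lemma trace_EE (k : ℕ) (A B : QMat n) : (EE k A B).trace = A.trace * B.trace := by
  rw [EE, trace_submatrix_equiv, trace_kronecker, trace_mlo, trace_mhi]

end EMAux

namespace EMAux
variable {n : ℕ}

lemma EE_n (A B : QMat n) : EE n A B = B.trace • A := by
  haveI : IsEmpty (Hi n n) := ⟨fun j => j.2 j.1.isLt⟩
  ext a b
  rw [EE_apply]
  have h1 : mlo n A ((spl n n) a).1 ((spl n n) b).1 = A a b := by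
    rw [mlo_apply]
    have : ∀ z : Hi n n → Fin 2, ∀ c : Fin n → Fin 2,
        (spl n n).symm (((spl n n) c).1, z) = c := by
      intro z c; funext j
      rw [spl_symm_apply, dif_pos j.isLt]; rfl
    rw [Finset.sum_congr rfl fun z _ => by rw [this z a, this z b]]
    simp
  have h2 : mhi n B ((spl n n) a).2 ((spl n n) b).2 = B.trace := by
    rw [mhi_apply]
    have hab : ((spl n n) a).2 = ((spl n n) b).2 := Subsingleton.elim _ _
    let e : (Lo n n → Fin 2) ≃ (Fin n → Fin 2) :=
      { toFun := fun z j => z ⟨j, j.isLt⟩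
        invFun := fun c j => c j.1
        left_inv := fun z => rfl
        right_inv := fun c => rfl }
    have key : ∀ z : Lo n n → Fin 2, (spl n n).symm (z, ((spl n n) a).2) = e z := by
      intro z; funext j
      rw [spl_symm_apply, dif_pos j.isLt]; rfl
    have hcong : (∑ z : Lo n n → Fin 2,
        B ((spl n n).symm (z, ((spl n n) a).2)) ((spl n n).symm (z, ((spl n n) b).2)))
        = ∑ z : Lo n n → Fin 2, B (e z) (e z) :=
      Finset.sum_congr rfl fun z _ => by rw [← hab, key z]
    rw [hcong]
    exact Equiv.sum_comp e (fun c => B c c)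
  rw [h1, h2, Matrix.smul_apply, smul_eq_mul, mul_comm]

lemma EE_0 (A B : QMat n) : EE 0 A B = A.trace • B := by
  haveI : IsEmpty (Lo n 0) := ⟨fun j => Nat.not_lt_zero _ j.2⟩
  ext a b
  rw [EE_apply]
  have h2 : mhi 0 B ((spl n 0) a).2 ((spl n 0) b).2 = B a b := by
    rw [mhi_apply]
    have : ∀ z : Lo n 0 → Fin 2, ∀ c : Fin n → Fin 2,
        (spl n 0).symm (z, ((spl n 0) c).2) = c := by
      intro z c; funext j
      rw [spl_symm_apply, dif_neg (Nat.not_lt_zero _)]; rfl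
    rw [Finset.sum_congr rfl fun z _ => by rw [this z a, this z b]]
    simp
  have h1 : mlo 0 A ((spl n 0) a).1 ((spl n 0) b).1 = A.trace := by
    rw [mlo_apply]
    have hab : ((spl n 0) a).1 = ((spl n 0) b).1 := Subsingleton.elim _ _
    let e : (Hi n 0 → Fin 2) ≃ (Fin n → Fin 2) :=
      { toFun := fun z j => z ⟨j, Nat.not_lt_zero _⟩
        invFun := fun c j => c j.1
        left_inv := fun z => rfl
        right_inv := fun c => rfl }
    have key : ∀ z : Hi n 0 → Fin 2, (spl n 0).symm (((spl n 0) a).1, z) = e z := by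
      intro z; funext j
      rw [spl_symm_apply, dif_neg (Nat.not_lt_zero _)]; rfl
    have hcong : (∑ z : Hi n 0 → Fin 2,
        A ((spl n 0).symm (((spl n 0) a).1, z)) ((spl n 0).symm (((spl n 0) b).1, z)))
        = ∑ z : Hi n 0 → Fin 2, A (e z) (e z) :=
      Finset.sum_congr rfl fun z _ => by rw [← hab, key z]
    rw [hcong]
    exact Equiv.sum_comp e (fun c => A c c)
  rw [h1, h2, Matrix.smul_apply, smul_eq_mul]

end EMAux

namespace EMAux
variable {n : ℕ}

lemma update_fst (i : Fin n) (a : Fin n → Fin 2) (v : Fin 2) :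
    ((spl n (i : ℕ)) (Function.update a i v)).1 = ((spl n (i : ℕ)) a).1 := by
  funext j
  rw [spl_fst, spl_fst]
  exact Function.update_of_ne (fun h => absurd (h ▸ j.2) (lt_irrefl _)) _ _

lemma update_snd (i : Fin n) (a : Fin n → Fin 2) (v : Fin 2) :
    ((spl n ((i : ℕ) + 1)) (Function.update a i v)).2 = ((spl n ((i : ℕ) + 1)) a).2 := by
  funext j
  rw [spl_snd, spl_snd]
  refine Function.update_of_ne (fun h => j.2 ?_) _ _
  rw [h]; exact Nat.lt_succ_self _

def E1 (i : Fin n) : (Fin 2 × (Lo n (i : ℕ) → Fin 2)) ≃ (Lo n ((i : ℕ) + 1) → Fin 2) where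
  toFun p := fun j => if h : (j.1 : ℕ) < (i : ℕ) then p.2 ⟨j.1, h⟩ else p.1
  invFun w := (w ⟨i, Nat.lt_succ_self _⟩, fun j => w ⟨j.1, Nat.lt_succ_of_lt j.2⟩)
  left_inv p := by
    obtain ⟨v, z⟩ := p
    refine Prod.ext ?_ ?_
    · show (if h : (i : ℕ) < (i : ℕ) then z ⟨i, h⟩ else v) = v
      rw [dif_neg (lt_irrefl _)]
    · funext j
      show (if h : (j.1 : ℕ) < (i : ℕ) then z ⟨j.1, h⟩ else v) = z j
      rw [dif_pos j.2]
  right_inv w := by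
    funext j
    by_cases h : (j.1 : ℕ) < (i : ℕ)
    · show (if h' : (j.1 : ℕ) < (i : ℕ) then w ⟨j.1, _⟩ else w ⟨i, _⟩) = w j
      rw [dif_pos h]
    · show (if h' : (j.1 : ℕ) < (i : ℕ) then w ⟨j.1, _⟩ else w ⟨i, _⟩) = w j
      rw [dif_neg h]
      exact congrArg w (Subtype.ext (Fin.ext (Nat.eq_of_lt_succ_of_not_lt j.2 h).symm))

def E2 (i : Fin n) : (Fin 2 × (Hi n ((i : ℕ) + 1) → Fin 2)) ≃ (Hi n (i : ℕ) → Fin 2) where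
  toFun p := fun j => if h : (j.1 : ℕ) < (i : ℕ) + 1 then p.1 else p.2 ⟨j.1, h⟩
  invFun w := (w ⟨i, lt_irrefl _⟩, fun j => w ⟨j.1, fun hh => j.2 (Nat.lt_succ_of_lt hh)⟩)
  left_inv p := by
    obtain ⟨v, z⟩ := p
    refine Prod.ext ?_ ?_
    · show (if h : (i : ℕ) < (i : ℕ) + 1 then v else z ⟨i, h⟩) = v
      rw [dif_pos (Nat.lt_succ_self _)]
    · funext j
      show (if h : (j.1 : ℕ) < (i : ℕ) + 1 then v else z ⟨j.1, h⟩) = z j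
      rw [dif_neg j.2]
  right_inv w := by
    funext j
    by_cases h : (j.1 : ℕ) < (i : ℕ) + 1
    · show (if h' : (j.1 : ℕ) < (i : ℕ) + 1 then w ⟨i, _⟩ else w ⟨j.1, _⟩) = w j
      rw [dif_pos h]
      exact congrArg w (Subtype.ext (Fin.ext (Nat.eq_of_lt_succ_of_not_lt h j.2).symm))
    · show (if h' : (j.1 : ℕ) < (i : ℕ) + 1 then w ⟨i, _⟩ else w ⟨j.1, _⟩) = w j
      rw [dif_neg h]

lemma P1 (i : Fin n) (a : Fin n → Fin 2) (v : Fin 2) (z : Hi n ((i : ℕ) + 1) → Fin 2) :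
    (spl n ((i : ℕ) + 1)).symm (((spl n ((i : ℕ) + 1)) (Function.update a i v)).1, z)
      = (spl n (i : ℕ)).symm (((spl n (i : ℕ)) a).1, E2 i (v, z)) := by
  funext j
  rw [spl_symm_apply, spl_symm_apply]
  rcases Nat.lt_trichotomy (j : ℕ) (i : ℕ) with h | h | h
  · rw [dif_pos (Nat.lt_succ_of_lt h), dif_pos h, spl_fst, spl_fst]
    exact Function.update_of_ne (fun hji => absurd (hji ▸ h) (lt_irrefl _)) _ _
  · have hj : j = i := Fin.ext h
    subst hj
    rw [dif_pos (Nat.lt_succ_self _), dif_neg (lt_irrefl _), spl_fst]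
    show Function.update a j v _ = E2 j (v, z) _
    rw [Function.update_self]
    show v = if h : ((j : ℕ) : ℕ) < (j : ℕ) + 1 then v else z _
    rw [dif_pos (Nat.lt_succ_self _)]
  · have h1 : ¬ (j : ℕ) < (i : ℕ) + 1 := by omega
    rw [dif_neg h1, dif_neg (by omega : ¬ (j : ℕ) < (i : ℕ))]
    show z _ = E2 i (v, z) _
    show z _ = if h : (j : ℕ) < (i : ℕ) + 1 then v else z _
    rw [dif_neg h1]

lemma P2 (i : Fin n) (a : Fin n → Fin 2) (v : Fin 2) (z : Lo n (i : ℕ) → Fin 2) :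
    (spl n (i : ℕ)).symm (z, ((spl n (i : ℕ)) (Function.update a i v)).2)
      = (spl n ((i : ℕ) + 1)).symm (E1 i (v, z), ((spl n ((i : ℕ) + 1)) a).2) := by
  funext j
  rw [spl_symm_apply, spl_symm_apply]
  rcases Nat.lt_trichotomy (j : ℕ) (i : ℕ) with h | h | h
  · rw [dif_pos h, dif_pos (Nat.lt_succ_of_lt h)]
    show z _ = E1 i (v, z) _
    show z _ = if h' : (j : ℕ) < (i : ℕ) then z _ else v
    rw [dif_pos h]
  · have hj : j = i := Fin.ext h
    subst hj
    rw [dif_neg (lt_irrefl _), dif_pos (Nat.lt_succ_self _), spl_snd]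
    rw [Function.update_self]
    show v = E1 j (v, z) _
    show v = if h' : ((j : ℕ) : ℕ) < (j : ℕ) then z _ else v
    rw [dif_neg (lt_irrefl _)]
  · have h1 : ¬ (j : ℕ) < (i : ℕ) + 1 := by omega
    rw [dif_neg (by omega : ¬ (j : ℕ) < (i : ℕ)), dif_neg h1, spl_snd, spl_snd]
    exact Function.update_of_ne (fun hji => absurd (hji ▸ h) (lt_irrefl _)) _ _

lemma S1 (i : Fin n) (A : QMat n) (a b : Fin n → Fin 2) :
    ∑ v : Fin 2, mlo ((i : ℕ) + 1) A (((spl n ((i : ℕ) + 1)) (Function.update a i v)).1)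
        (((spl n ((i : ℕ) + 1)) (Function.update b i v)).1)
      = mlo (i : ℕ) A ((spl n (i : ℕ)) a).1 ((spl n (i : ℕ)) b).1 := by
  simp only [mlo_apply]
  rw [← Equiv.sum_comp (E2 i) (fun w => A ((spl n (i : ℕ)).symm (((spl n (i : ℕ)) a).1, w))
    ((spl n (i : ℕ)).symm (((spl n (i : ℕ)) b).1, w))), Fintype.sum_prod_type]
  exact Finset.sum_congr rfl fun v _ => Finset.sum_congr rfl fun z _ => by
    rw [P1 i a v z, P1 i b v z]

lemma S2 (i : Fin n) (B : QMat n) (a b : Fin n → Fin 2) :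
    ∑ v : Fin 2, mhi (i : ℕ) B (((spl n (i : ℕ)) (Function.update a i v)).2)
        (((spl n (i : ℕ)) (Function.update b i v)).2)
      = mhi ((i : ℕ) + 1) B ((spl n ((i : ℕ) + 1)) a).2 ((spl n ((i : ℕ) + 1)) b).2 := by
  simp only [mhi_apply]
  rw [← Equiv.sum_comp (E1 i) (fun w => B ((spl n ((i : ℕ) + 1)).symm (w,
      ((spl n ((i : ℕ) + 1)) a).2)) ((spl n ((i : ℕ) + 1)).symm (w, ((spl n ((i : ℕ) + 1)) b).2))),
    Fintype.sum_prod_type]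
  exact Finset.sum_congr rfl fun v _ => Finset.sum_congr rfl fun z _ => by
    rw [P2 i a v z, P2 i b v z]

lemma sum_update_EE_succ (i : Fin n) (A B : QMat n) (a b : Fin n → Fin 2) :
    ∑ v : Fin 2, EE ((i : ℕ) + 1) A B (Function.update a i v) (Function.update b i v)
      = mlo (i : ℕ) A ((spl n (i : ℕ)) a).1 ((spl n (i : ℕ)) b).1
        * mhi ((i : ℕ) + 1) B ((spl n ((i : ℕ) + 1)) a).2 ((spl n ((i : ℕ) + 1)) b).2 := by
  simp only [EE_apply]
  have : ∀ v : Fin 2, mlo ((i : ℕ) + 1) A (((spl n ((i : ℕ) + 1)) (Function.update a i v)).1)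
        (((spl n ((i : ℕ) + 1)) (Function.update b i v)).1)
      * mhi ((i : ℕ) + 1) B (((spl n ((i : ℕ) + 1)) (Function.update a i v)).2)
        (((spl n ((i : ℕ) + 1)) (Function.update b i v)).2)
      = mlo ((i : ℕ) + 1) A (((spl n ((i : ℕ) + 1)) (Function.update a i v)).1)
        (((spl n ((i : ℕ) + 1)) (Function.update b i v)).1)
      * mhi ((i : ℕ) + 1) B ((spl n ((i : ℕ) + 1)) a).2 ((spl n ((i : ℕ) + 1)) b).2 := by
    intro v
    rw [update_snd i a v, update_snd i b v]
  rw [Finset.sum_congr rfl fun v _ => this v, ← Finset.sum_mul, S1]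

lemma sum_update_EE_self (i : Fin n) (A B : QMat n) (a b : Fin n → Fin 2) :
    ∑ v : Fin 2, EE (i : ℕ) A B (Function.update a i v) (Function.update b i v)
      = mlo (i : ℕ) A ((spl n (i : ℕ)) a).1 ((spl n (i : ℕ)) b).1
        * mhi ((i : ℕ) + 1) B ((spl n ((i : ℕ) + 1)) a).2 ((spl n ((i : ℕ) + 1)) b).2 := by
  simp only [EE_apply]
  have : ∀ v : Fin 2, mlo (i : ℕ) A (((spl n (i : ℕ)) (Function.update a i v)).1)
        (((spl n (i : ℕ)) (Function.update b i v)).1)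
      * mhi (i : ℕ) B (((spl n (i : ℕ)) (Function.update a i v)).2)
        (((spl n (i : ℕ)) (Function.update b i v)).2)
      = mlo (i : ℕ) A ((spl n (i : ℕ)) a).1 ((spl n (i : ℕ)) b).1
      * mhi (i : ℕ) B (((spl n (i : ℕ)) (Function.update a i v)).2)
        (((spl n (i : ℕ)) (Function.update b i v)).2) := by
    intro v
    rw [update_fst i a v, update_fst i b v]
  rw [Finset.sum_congr rfl fun v _ => this v, ← Finset.mul_sum, S2]

end EMAux

end KronSec


namespace EMAux
open Matrix
variable {n : ℕ}

lemma traceNorm_zero : traceNorm (0 : QMat n) = 0 := by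
  refine le_antisymm ?_ (traceNorm_nonneg _)
  simpa using traceNorm_le_decomp (n := n) PosSemidef.zero PosSemidef.zero (by simp)

lemma herm_real_smul {M : QMat n} (hM : M.IsHermitian) (c : ℝ) :
    ((c : ℂ) • M).IsHermitian := by
  rw [IsHermitian, conjTranspose_smul, hM.eq]
  congr 1
  simp [Complex.star_def, Complex.conj_ofReal]

lemma exists_good_decomp (X : QMat n) (hX : X.IsHermitian) (htr : X.trace = 0) :
    ∃ Xs : Fin n → QMat n, (∀ i, (Xs i).IsHermitian) ∧ (∀ i, ptraceZero i (Xs i)) ∧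
      (∑ i, Xs i) = X ∧ (∑ i, traceNorm (Xs i)) ≤ (n : ℝ) * traceNorm X := by
  obtain ⟨P, Q, hP, hQ, hd, htn⟩ := exists_jordan' hX
  have hPt : 0 ≤ P.trace := psd_trace_nonneg hP
  have hQt : 0 ≤ Q.trace := psd_trace_nonneg hQ
  set t : ℝ := P.trace.re with ht
  have htnn : 0 ≤ t := (Complex.le_def.mp hPt).1
  have hPre : P.trace = (t : ℂ) := by
    refine Complex.ext rfl ?_
    rw [Complex.ofReal_im]
    exact ((Complex.le_def.mp hPt).2).symm
  have hQP : Q.trace = P.trace := by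
    have h1 : X.trace = P.trace - Q.trace := by rw [hd, trace_sub]
    rw [htr] at h1
    exact (sub_eq_zero.mp h1.symm).symm
  have htn2 : traceNorm X = 2 * t := by
    rw [← htn, hQP, hPre, ← Complex.ofReal_add, Complex.ofReal_re]
    ring
  rcases eq_or_lt_of_le htnn with h0 | h0
  · -- t = 0 : X = 0
    have hX0 : X = 0 := by
      refine eq_zero_of_traceNorm_eq_zero hX ?_
      rw [htn2, ← h0]; ring
    refine ⟨fun _ => 0, fun i => isHermitian_zero, fun i a b => by simp [ptraceZero], ?_, ?_⟩
    · rw [hX0]; simp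
    · have hz : (∑ _i : Fin n, traceNorm (0 : QMat n)) = 0 := by simp [traceNorm_zero]
      rw [hz, htn2, ← h0]
      simp
  · -- t > 0
    have htne : (t : ℂ) ≠ 0 := by
      simp only [ne_eq, Complex.ofReal_eq_zero]
      exact ne_of_gt h0
    set c : ℂ := ((t : ℝ) : ℂ)⁻¹ with hc
    have hcre : c = (((t⁻¹ : ℝ) : ℝ) : ℂ) := by rw [hc, Complex.ofReal_inv]
    refine ⟨fun i => c • (EE ((i : ℕ) + 1) P Q - EE (i : ℕ) P Q), ?_, ?_, ?_, ?_⟩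
    · intro i
      have := ((EE_psd ((i : ℕ) + 1) hP hQ).1).sub ((EE_psd (i : ℕ) hP hQ).1)
      rw [hcre]
      exact herm_real_smul this _
    · intro i a b
      have hv : ∀ v : Fin 2,
          (c • (EE ((i : ℕ) + 1) P Q - EE (i : ℕ) P Q))
              (Function.update a i v) (Function.update b i v)
            = c * (EE ((i : ℕ) + 1) P Q (Function.update a i v) (Function.update b i v)
              - EE (i : ℕ) P Q (Function.update a i v) (Function.update b i v)) := by
        intro v; simp [Matrix.smul_apply, Matrix.sub_apply]
      rw [Finset.sum_congr rfl fun v _ => hv v, ← Finset.mul_sum, Finset.sum_sub_distrib,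
        sum_update_EE_succ, sum_update_EE_self, sub_self, mul_zero]
    · have htel : ∑ i : Fin n, (EE ((i : ℕ) + 1) P Q - EE (i : ℕ) P Q)
          = EE n P Q - EE 0 P Q := by
        rw [Fin.sum_univ_eq_sum_range (fun k => EE (k + 1) P Q - EE k P Q) n]
        exact Finset.sum_range_sub (fun k => EE k P Q) n
      rw [← Finset.smul_sum, htel, EE_n, EE_0, hQP, hPre, ← smul_sub, smul_smul, hc,
        inv_mul_cancel₀ htne, one_smul, hd]
    · have hbound : ∀ i : Fin n,
          traceNorm (c • (EE ((i : ℕ) + 1) P Q - EE (i : ℕ) P Q)) ≤ traceNorm X := by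
        intro i
        have hdecomp : c • (EE ((i : ℕ) + 1) P Q - EE (i : ℕ) P Q)
            = c • EE ((i : ℕ) + 1) P Q - c • EE (i : ℕ) P Q := smul_sub _ _ _
        have hps1 : (c • EE ((i : ℕ) + 1) P Q).PosSemidef := by
          rw [hcre]; exact psd_smul (EE_psd _ hP hQ) (by positivity)
        have hps2 : (c • EE (i : ℕ) P Q).PosSemidef := by
          rw [hcre]; exact psd_smul (EE_psd _ hP hQ) (by positivity)
        refine le_trans (traceNorm_le_decomp hps1 hps2 hdecomp) ?_
        have htr1 : (c • EE ((i : ℕ) + 1) P Q).trace = (t : ℂ) := by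
          rw [trace_smul, trace_EE, hQP, hPre, smul_eq_mul, hc]
          field_simp
        have htr2 : (c • EE (i : ℕ) P Q).trace = (t : ℂ) := by
          rw [trace_smul, trace_EE, hQP, hPre, smul_eq_mul, hc]
          field_simp
        rw [htr1, htr2, htn2, ← Complex.ofReal_add, Complex.ofReal_re]
        linarith
      calc ∑ i : Fin n, traceNorm (c • (EE ((i : ℕ) + 1) P Q - EE (i : ℕ) P Q))
          ≤ ∑ _i : Fin n, traceNorm X := Finset.sum_le_sum fun i _ => hbound i
        _ = (n : ℝ) * traceNorm X := by
            rw [Finset.sum_const, Finset.card_univ, Fintype.card_fin, nsmul_eq_mul]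

end EMAux

/-- The quantum EM distance is squeezed between the trace distance and `n` times
the trace distance: `D₁(ρ,σ) ≤ D_EM(ρ,σ) ≤ n·D₁(ρ,σ)` with `D₁(ρ,σ) = ‖ρ−σ‖₁/2`. -/
theorem traceDist_le_emDist_le (n : ℕ) (ρ σ : QMat n) (hρ : IsState ρ) (hσ : IsState σ) :
    traceNorm (ρ - σ) / 2 ≤ emDist ρ σ ∧
    emDist ρ σ ≤ (n : ℝ) * (traceNorm (ρ - σ) / 2) := by
  have hX : (ρ - σ).IsHermitian := hρ.1.1.sub hσ.1.1
  have htr : (ρ - σ).trace = 0 := by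
    rw [Matrix.trace_sub, hρ.2, hσ.2, sub_self]
  obtain ⟨Xs, h1, h2, h3, h4⟩ := EMAux.exists_good_decomp (ρ - σ) hX htr
  set S : Set ℝ := { r | ∃ Xs : Fin n → QMat n,
    (∀ i, (Xs i).IsHermitian) ∧ (∀ i, ptraceZero i (Xs i)) ∧
    (∑ i, Xs i) = ρ - σ ∧ r = ∑ i, traceNorm (Xs i) } with hS
  have hE : emDist ρ σ = (1 / 2) * sInf S := rfl
  have hmem : (∑ i, traceNorm (Xs i)) ∈ S := ⟨Xs, h1, h2, h3, rfl⟩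
  have hbdd : BddBelow S := by
    refine ⟨0, fun r hr => ?_⟩
    obtain ⟨Ys, -, -, -, hr⟩ := hr
    rw [hr]
    exact Finset.sum_nonneg fun i _ => EMAux.traceNorm_nonneg _
  constructor
  · have hle : traceNorm (ρ - σ) ≤ sInf S := by
      refine le_csInf ⟨_, hmem⟩ fun r hr => ?_
      obtain ⟨Ys, hH, -, hsum, hr⟩ := hr
      rw [hr, ← hsum]
      exact EMAux.traceNorm_sum_le Ys hH
    rw [hE]
    linarith
  · have hge : sInf S ≤ ∑ i, traceNorm (Xs i) := csInf_le hbdd hmem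
    rw [hE]
    have := h4
    linarith
end
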